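/- Let n be a natural number and ω₁, …, ω_n pairwise distinct complex numbers. Then the tuple of formal power series (e^{ω₁ z}, …, e^{ω_n z}) ∈ ℂ[[z]]^n is perfect, i.e. every index m ∈ ℤ_{≥0}^n is normal with respect to (e^{ω₁ z}, …, e^{ω_n z}). In particular, for every l ∈ ℕ, the tuple (1, e^z, e^{2z}, …, e^{lz}) is perfect. -/

import Mathlib

open PowerSeries

/-- `(A₁,…,A_m)` is a weight-`nn` Padé approximant of `f = (f₁,…,f_m)`. -/
def IsPadeApprox {K : Type*} [Field K] {m : ℕ} (f : Fin m → PowerSeries K)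
    (nn : Fin m → ℕ) (A : Fin m → Polynomial K) : Prop :=
  A ≠ 0 ∧ (∀ j, (A j).degree ≤ (nn j : ℕ)) ∧
    (((∑ j, (nn j + 1)) - 1 : ℕ) : ℕ∞) ≤ (∑ j, (A j : PowerSeries K) * f j).order

/-- The index `nn` is normal with respect to `f`. -/
def IsNormal {K : Type*} [Field K] {m : ℕ} (f : Fin m → PowerSeries K)
    (nn : Fin m → ℕ) : Prop :=
  ∀ A : Fin m → Polynomial K, IsPadeApprox f nn A →
    (∑ j, (A j : PowerSeries K) * f j).order = (((∑ j, (nn j + 1)) - 1 : ℕ) : ℕ∞)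

/-- `f` is perfect: every index is normal with respect to `f`. -/
def IsPerfect {K : Type*} [Field K] {m : ℕ} (f : Fin m → PowerSeries K) : Prop :=
  ∀ nn : Fin m → ℕ, IsNormal f nn

/-- The exponential formal power series `e^{ωz} = Σ_k ω^k z^k / k!`. -/
noncomputable def expPS (ω : ℂ) : PowerSeries ℂ :=
  PowerSeries.mk fun k => ω ^ k / (k.factorial : ℂ)

lemma expPS_order (ω : ℂ) : (expPS ω).order = 0 := by
  refine le_antisymm ?_ (zero_le)
  have : PowerSeries.coeff 0 (expPS ω) ≠ 0 := by simp [expPS]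
  exact_mod_cast PowerSeries.order_le 0 this

lemma deriv_expPS (ω : ℂ) : d⁄dX ℂ (expPS ω) = PowerSeries.C ω * expPS ω := by
  ext k
  rw [PowerSeries.coeff_derivative, PowerSeries.coeff_C_mul]
  simp only [expPS, PowerSeries.coeff_mk]
  have h1 : ((k : ℂ) + 1) ≠ 0 := by exact_mod_cast Nat.succ_ne_zero k
  have h2 : ((k.factorial : ℕ) : ℂ) ≠ 0 := by exact_mod_cast k.factorial_ne_zero
  have h3 : (((k+1).factorial : ℕ) : ℂ) = ((k:ℂ)+1) * (k.factorial : ℂ) := by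
    rw [Nat.factorial_succ]; push_cast; ring
  rw [h3, pow_succ]
  field_simp

noncomputable def Lop (c : ℂ) (f : PowerSeries ℂ) : PowerSeries ℂ :=
  d⁄dX ℂ f - PowerSeries.C c * f

lemma Lop_sum {ι : Type*} (c : ℂ) (s : Finset ι) (g : ι → PowerSeries ℂ) :
    Lop c (∑ j ∈ s, g j) = ∑ j ∈ s, Lop c (g j) := by
  simp [Lop, map_sum, Finset.mul_sum, Finset.sum_sub_distrib]

lemma Lop_poly_mul (c ω : ℂ) (A : Polynomial ℂ) :
    Lop c ((A : PowerSeries ℂ) * expPS ω) =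
      ((Polynomial.derivative A + Polynomial.C (ω - c) * A : Polynomial ℂ) : PowerSeries ℂ)
        * expPS ω := by
  unfold Lop
  rw [Derivation.leibniz, PowerSeries.derivative_coe, deriv_expPS]
  push_cast [Polynomial.coe_add, Polynomial.coe_mul, Polynomial.coe_C]
  rw [smul_eq_mul, smul_eq_mul, map_sub]
  ring

lemma order_le_of_Lop {c : ℂ} {f : PowerSeries ℂ} {k : ℕ}
    (h : (Lop c f).order ≤ (k : ℕ∞)) : f.order ≤ ((k + 1 : ℕ) : ℕ∞) := by
  by_contra hc
  push_neg at hc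
  have h0 : ∀ i : ℕ, i ≤ k + 1 → PowerSeries.coeff i f = 0 := by
    intro i hi
    refine PowerSeries.coeff_of_lt_order i (lt_of_le_of_lt ?_ hc)
    exact_mod_cast hi
  have hk : ((k + 1 : ℕ) : ℕ∞) ≤ (Lop c f).order := by
    refine PowerSeries.nat_le_order _ _ ?_
    intro i hi
    simp only [Lop, map_sub, PowerSeries.coeff_derivative, PowerSeries.coeff_C_mul]
    rw [h0 i (by omega), h0 (i+1) (by omega)]
    ring
  have : ((k+1:ℕ) : ℕ∞) ≤ (k : ℕ∞) := hk.trans h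
  exact absurd this (by exact_mod_cast Nat.not_succ_le_self k)

lemma base_bound {A : Polynomial ℂ} (hA : A ≠ 0) (ω : ℂ) :
    ((A : PowerSeries ℂ) * expPS ω).order ≤ (A.natDegree : ℕ∞) := by
  rw [PowerSeries.order_mul, expPS_order, add_zero]
  refine PowerSeries.order_le _ ?_
  rw [Polynomial.coeff_coe]
  exact Polynomial.leadingCoeff_ne_zero.mpr hA

lemma B_spec {A : Polynomial ℂ} (hA : A ≠ 0) {d : ℂ} (hd : d ≠ 0) :
    (Polynomial.derivative A + Polynomial.C d * A) ≠ 0 ∧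
    (Polynomial.derivative A + Polynomial.C d * A).natDegree = A.natDegree := by
  set n := A.natDegree
  have hco : (Polynomial.derivative A + Polynomial.C d * A).coeff n = d * A.coeff n := by
    rw [Polynomial.coeff_add, Polynomial.coeff_derivative, Polynomial.coeff_C_mul,
      Polynomial.coeff_eq_zero_of_natDegree_lt (by omega : A.natDegree < n + 1)]
    ring
  have hne : (Polynomial.derivative A + Polynomial.C d * A).coeff n ≠ 0 := by
    rw [hco]
    exact mul_ne_zero hd (Polynomial.leadingCoeff_ne_zero.mpr hA)
  refine ⟨fun h => hne (by simp [h]), le_antisymm ?_ (Polynomial.le_natDegree_of_ne_zero hne)⟩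
  refine (Polynomial.natDegree_add_le _ _).trans (max_le ?_ ?_)
  · exact (Polynomial.natDegree_derivative_le A).trans (Nat.sub_le _ _)
  · exact Polynomial.natDegree_C_mul_le _ _

lemma deriv_natDegree {A : Polynomial ℂ} (h : A.natDegree ≠ 0) :
    Polynomial.derivative A ≠ 0 ∧ (Polynomial.derivative A).natDegree = A.natDegree - 1 := by
  have hne : (Polynomial.derivative A).coeff (A.natDegree - 1) ≠ 0 := by
    rw [Polynomial.coeff_derivative]
    have h1 : A.natDegree - 1 + 1 = A.natDegree := by omega
    rw [h1]
    have h2 : ((A.natDegree - 1 : ℕ) : ℂ) + 1 ≠ 0 := by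
      exact_mod_cast Nat.succ_ne_zero (A.natDegree - 1)
    refine mul_ne_zero (Polynomial.leadingCoeff_ne_zero.mpr ?_) h2
    intro h0; simp [h0] at h
  exact ⟨fun h0 => hne (by simp [h0]),
    le_antisymm (Polynomial.natDegree_derivative_le A) (Polynomial.le_natDegree_of_ne_zero hne)⟩

lemma main_bound {m : ℕ} (ω : Fin m → ℂ) :
    ∀ N : ℕ, ∀ (s : Finset (Fin m)) (A : Fin m → Polynomial ℂ),
      s.Nonempty → (∀ j ∈ s, A j ≠ 0) → Set.InjOn ω s →
      (∑ j ∈ s, ((A j).natDegree + 1)) = N →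
      (∑ j ∈ s, ((A j : PowerSeries ℂ) * expPS (ω j))).order ≤ ((N - 1 : ℕ) : ℕ∞) := by
  intro N
  induction N using Nat.strong_induction_on with
  | _ N ih =>
  intro s A hs hA hinj hN
  obtain ⟨j₀, hj₀⟩ := hs
  by_cases hsing : s = {j₀}
  · subst hsing
    rw [Finset.sum_singleton] at hN ⊢
    have : N - 1 = (A j₀).natDegree := by omega
    rw [this]
    exact base_bound (hA j₀ (Finset.mem_singleton_self j₀)) _
  · -- general case
    set c := ω j₀ with hc
    set B : Fin m → Polynomial ℂ :=
      fun j => Polynomial.derivative (A j) + Polynomial.C (ω j - c) * A j with hB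
    have hLsum : Lop c (∑ j ∈ s, ((A j : PowerSeries ℂ) * expPS (ω j)))
        = ∑ j ∈ s, ((B j : PowerSeries ℂ) * expPS (ω j)) := by
      rw [Lop_sum]
      exact Finset.sum_congr rfl fun j _ => Lop_poly_mul c (ω j) (A j)
    have hBj : ∀ j ∈ s, j ≠ j₀ → B j ≠ 0 ∧ (B j).natDegree = (A j).natDegree := by
      intro j hj hjne
      have hd : ω j - c ≠ 0 := sub_ne_zero.mpr (fun h => hjne (hinj hj hj₀ h))
      exact B_spec (hA j hj) hd
    -- `s` has at least two elements
    obtain ⟨j₁, hj₁s, hj₁ne⟩ : ∃ j₁ ∈ s, j₁ ≠ j₀ := by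
      by_contra hcon
      push_neg at hcon
      exact hsing (Finset.eq_singleton_iff_unique_mem.mpr ⟨hj₀, hcon⟩)
    have hN2 : 2 ≤ N := by
      rw [← hN]
      calc 2 = ∑ j ∈ ({j₀, j₁} : Finset (Fin m)), 1 := by
              simp [Finset.card_pair (Ne.symm hj₁ne)]
            _ ≤ ∑ j ∈ s, ((A j).natDegree + 1) := by
              refine Finset.sum_le_sum_of_subset_of_nonneg ?_ (fun _ _ _ => Nat.zero_le _)
                |>.trans (Finset.sum_le_sum (fun j _ => by omega))
              intro x hx
              simp only [Finset.mem_insert, Finset.mem_singleton] at hx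
              rcases hx with rfl | rfl <;> assumption
    by_cases h0 : (A j₀).natDegree = 0
    · -- constant leading polynomial: the j₀ term dies
      have hBj₀ : B j₀ = 0 := by
        have hd : Polynomial.derivative (A j₀) = 0 := by
          obtain ⟨a, ha⟩ := Polynomial.natDegree_eq_zero.mp h0
          rw [← ha, Polynomial.derivative_C]
        show Polynomial.derivative (A j₀) + Polynomial.C (ω j₀ - c) * A j₀ = 0
        rw [hd, hc, sub_self, Polynomial.C_0, zero_mul, add_zero]
      set s' := s.erase j₀ with hs'
      have hs'ne : s'.Nonempty := ⟨j₁, Finset.mem_erase.mpr ⟨hj₁ne, hj₁s⟩⟩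
      have hsum' : ∑ j ∈ s, ((B j : PowerSeries ℂ) * expPS (ω j))
          = ∑ j ∈ s', ((B j : PowerSeries ℂ) * expPS (ω j)) := by
        rw [hs', Finset.sum_erase]
        rw [hBj₀]
        simp
      have hNs' : ∑ j ∈ s', ((B j).natDegree + 1) = N - 1 := by
        have h1 : ∑ j ∈ s', ((B j).natDegree + 1) = ∑ j ∈ s', ((A j).natDegree + 1) :=
          Finset.sum_congr rfl fun j hj => by
            rw [(hBj j (Finset.mem_of_mem_erase hj) (Finset.ne_of_mem_erase hj)).2]
        have h2 : ∑ j ∈ s, ((A j).natDegree + 1)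
            = ((A j₀).natDegree + 1) + ∑ j ∈ s', ((A j).natDegree + 1) :=
          (Finset.add_sum_erase s _ hj₀).symm
        omega
      have hB' : ∀ j ∈ s', B j ≠ 0 := fun j hj =>
        (hBj j (Finset.mem_of_mem_erase hj) (Finset.ne_of_mem_erase hj)).1
      have hinj' : Set.InjOn ω s' := hinj.mono (fun x hx => Finset.mem_of_mem_erase hx)
      have hord : (Lop c (∑ j ∈ s, ((A j : PowerSeries ℂ) * expPS (ω j)))).order
          ≤ ((N - 2 : ℕ) : ℕ∞) := by
        rw [hLsum, hsum']
        have h := ih (N-1) (by omega) s' B hs'ne hB' hinj' hNs'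
        rw [show N - 1 - 1 = N - 2 from by omega] at h
        exact h
      have h := order_le_of_Lop hord
      rw [show N - 2 + 1 = N - 1 from by omega] at h
      exact h
    · -- the j₀ polynomial has positive degree
      have hBj₀ : B j₀ = Polynomial.derivative (A j₀) := by
        show Polynomial.derivative (A j₀) + Polynomial.C (ω j₀ - c) * A j₀ = _
        rw [hc, sub_self, Polynomial.C_0, zero_mul, add_zero]
      obtain ⟨hd0, hd1⟩ := deriv_natDegree h0
      have hB' : ∀ j ∈ s, B j ≠ 0 := by
        intro j hj
        by_cases hje : j = j₀
        · subst hje; rw [hBj₀]; exact hd0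
        · exact (hBj j hj hje).1
      have hNs' : ∑ j ∈ s, ((B j).natDegree + 1) = N - 1 := by
        have h2 : ∑ j ∈ s, ((A j).natDegree + 1)
            = ((A j₀).natDegree + 1) + ∑ j ∈ s.erase j₀, ((A j).natDegree + 1) :=
          (Finset.add_sum_erase s _ hj₀).symm
        have h3 : ∑ j ∈ s, ((B j).natDegree + 1)
            = ((B j₀).natDegree + 1) + ∑ j ∈ s.erase j₀, ((B j).natDegree + 1) :=
          (Finset.add_sum_erase s _ hj₀).symm
        have h4 : ∑ j ∈ s.erase j₀, ((B j).natDegree + 1)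
            = ∑ j ∈ s.erase j₀, ((A j).natDegree + 1) :=
          Finset.sum_congr rfl fun j hj => by
            rw [(hBj j (Finset.mem_of_mem_erase hj) (Finset.ne_of_mem_erase hj)).2]
        have h5 : (B j₀).natDegree = (A j₀).natDegree - 1 := by rw [hBj₀]; exact hd1
        omega
      have hord : (Lop c (∑ j ∈ s, ((A j : PowerSeries ℂ) * expPS (ω j)))).order
          ≤ ((N - 2 : ℕ) : ℕ∞) := by
        rw [hLsum]
        have h := ih (N-1) (by omega) s B ⟨j₀, hj₀⟩ hB' hinj hNs'
        rw [show N - 1 - 1 = N - 2 from by omega] at h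
        exact h
      have h := order_le_of_Lop hord
      rw [show N - 2 + 1 = N - 1 from by omega] at h
      exact h

lemma perfect_of_inj {m : ℕ} (ω : Fin m → ℂ) (hω : Function.Injective ω) :
    IsPerfect (fun h => expPS (ω h)) := by
  classical
  intro nn A ⟨hA0, hdeg, hord⟩
  refine le_antisymm ?_ hord
  set s : Finset (Fin m) := Finset.univ.filter (fun j => A j ≠ 0) with hsdef
  have hs : s.Nonempty := by
    obtain ⟨j, hj⟩ := Function.ne_iff.mp hA0
    have hj' : A j ≠ 0 := by simpa using hj
    exact ⟨j, by simp [hsdef, hj']⟩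
  have hsum : ∑ j, ((A j : PowerSeries ℂ) * expPS (ω j))
      = ∑ j ∈ s, ((A j : PowerSeries ℂ) * expPS (ω j)) := by
    refine (Finset.sum_subset (Finset.subset_univ s) ?_).symm
    intro j _ hj
    have : A j = 0 := by simpa [hsdef] using hj
    simp [this]
  have hmain := main_bound ω (∑ j ∈ s, ((A j).natDegree + 1)) s A hs
    (fun j hj => by simpa [hsdef] using hj) (hω.injOn) rfl
  have hle : ∑ j ∈ s, ((A j).natDegree + 1) ≤ ∑ j, (nn j + 1) := by
    calc ∑ j ∈ s, ((A j).natDegree + 1) ≤ ∑ j ∈ s, (nn j + 1) := by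
          refine Finset.sum_le_sum fun j hj => ?_
          have hAj : A j ≠ 0 := by simpa [hsdef] using hj
          have := Polynomial.natDegree_le_iff_degree_le.mpr (hdeg j)
          omega
      _ ≤ ∑ j, (nn j + 1) :=
          Finset.sum_le_sum_of_subset_of_nonneg (Finset.subset_univ s)
            (fun _ _ _ => Nat.zero_le _)
  have h := hmain.trans (Nat.cast_le.mpr (Nat.sub_le_sub_right hle 1))
  simpa only [hsum] using h

/-- for pairwise distinct `ω₁,…,ω_n`, the tuple `(e^{ω₁z},…,e^{ω_nz})` is
perfect; in particular `(1, e^z, …, e^{lz})` is perfect for every `l`. -/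
theorem exp_perfect (n : ℕ) (hn : 0 < n) (ω : Fin n → ℂ) (hω : Function.Injective ω) :
    IsPerfect (fun h => expPS (ω h)) ∧
      ∀ l : ℕ, IsPerfect (fun i : Fin (l + 1) => expPS ((i : ℕ) : ℂ)) := by
  refine ⟨perfect_of_inj ω hω, fun l => perfect_of_inj _ ?_⟩
  intro i j hij
  exact Fin.ext (Nat.cast_injective hij)
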